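/- (Equivalence of the kernel boundary value problem and its integral equation) Let G be a C³ function on the closed triangle Δ_{s,t} = {(s,t): s,t ≥ 0, s + t ≤ L} and define DG = (1/3)[3G_{tts} - G_{ttt} - iα̃(2G_{ts} - G_{tt}) - δ̃ G_t + r̃ G]. Then G satisfies the boundary value problem {3G_{sst} - 3G_{tts} + G_{ttt} + iα̃(2G_{ts} - G_{tt}) + δ̃ G_t - r̃ G = 0, G(0,t) = 0, G(s,0) = 0, G_s(0,t) = -r̃ t/3} if and only if G satisfies the integral equation G(s,t) = -(r̃/3) s t + ∫₀^t ∫₀^s ∫₀^ω [DG](ξ,η) dξ dω dη. -/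

import Mathlib

open intervalIntegral
open Function Set MeasureTheory

/-- Partial derivative in the first variable. -/
noncomputable def pdx (f : ℝ → ℝ → ℂ) : ℝ → ℝ → ℂ := fun s t => deriv (fun s' => f s' t) s

/-- Partial derivative in the second variable. -/
noncomputable def pdy (f : ℝ → ℝ → ℂ) : ℝ → ℝ → ℂ := fun s t => deriv (fun t' => f s t') t

namespace Stmt17Aux

lemma contX {H : ℝ → ℝ → ℂ} (h : Continuous (uncurry H)) (t : ℝ) :
    Continuous fun s => H s t := h.comp (continuous_id.prodMk continuous_const)

lemma contY {H : ℝ → ℝ → ℂ} (h : Continuous (uncurry H)) (s : ℝ) :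
    Continuous fun t => H s t := h.comp (continuous_const.prodMk continuous_id)

lemma diffX {H : ℝ → ℝ → ℂ} (h : Differentiable ℝ (uncurry H)) (t : ℝ) :
    Differentiable ℝ fun s => H s t :=
  h.comp (differentiable_id.prodMk (differentiable_const t))

lemma diffY {H : ℝ → ℝ → ℂ} (h : Differentiable ℝ (uncurry H)) (s : ℝ) :
    Differentiable ℝ fun t => H s t :=
  h.comp ((differentiable_const s).prodMk differentiable_id)

lemma hasDerivAt_pdx {H : ℝ → ℝ → ℂ} (h : Differentiable ℝ (uncurry H)) (s t : ℝ) :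
    HasDerivAt (fun s' => H s' t) (pdx H s t) s :=
  ((diffX h t) s).hasDerivAt

lemma hasDerivAt_pdy {H : ℝ → ℝ → ℂ} (h : Differentiable ℝ (uncurry H)) (s t : ℝ) :
    HasDerivAt (fun t' => H s t') (pdy H s t) t :=
  ((diffY h s) t).hasDerivAt

lemma hasDerivAt_line (t s : ℝ) : HasDerivAt (fun s' : ℝ => (s', t)) ((1 : ℝ), (0 : ℝ)) s :=
  (hasDerivAt_id s).prodMk (hasDerivAt_const s t)

lemma hasDerivAt_line' (s t : ℝ) : HasDerivAt (fun t' : ℝ => (s, t')) ((0 : ℝ), (1 : ℝ)) t :=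
  (hasDerivAt_const t s).prodMk (hasDerivAt_id t)

lemma pdx_eq_fderiv {H : ℝ → ℝ → ℂ} (h : Differentiable ℝ (uncurry H)) (s t : ℝ) :
    pdx H s t = fderiv ℝ (uncurry H) (s, t) (1, 0) := by
  have := ((h (s, t)).hasFDerivAt.comp_hasDerivAt s (hasDerivAt_line t s))
  exact this.deriv

lemma pdy_eq_fderiv {H : ℝ → ℝ → ℂ} (h : Differentiable ℝ (uncurry H)) (s t : ℝ) :
    pdy H s t = fderiv ℝ (uncurry H) (s, t) (0, 1) := by
  have := ((h (s, t)).hasFDerivAt.comp_hasDerivAt t (hasDerivAt_line' s t))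
  exact this.deriv

lemma contDiff_pdx {H : ℝ → ℝ → ℂ} {n : WithTop ℕ∞}
    (h : ContDiff ℝ (n + 1) (uncurry H)) : ContDiff ℝ n (uncurry (pdx H)) := by
  have hd : Differentiable ℝ (uncurry H) := h.differentiable (by simp)
  have h' : ContDiff ℝ n (fderiv ℝ (uncurry H)) := (contDiff_succ_iff_fderiv.mp h).2.2
  have : uncurry (pdx H) = fun p : ℝ × ℝ => fderiv ℝ (uncurry H) p (1, 0) := by
    funext p
    exact pdx_eq_fderiv hd p.1 p.2
  rw [this]
  exact h'.clm_apply contDiff_const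

lemma contDiff_pdy {H : ℝ → ℝ → ℂ} {n : WithTop ℕ∞}
    (h : ContDiff ℝ (n + 1) (uncurry H)) : ContDiff ℝ n (uncurry (pdy H)) := by
  have hd : Differentiable ℝ (uncurry H) := h.differentiable (by simp)
  have h' : ContDiff ℝ n (fderiv ℝ (uncurry H)) := (contDiff_succ_iff_fderiv.mp h).2.2
  have : uncurry (pdy H) = fun p : ℝ × ℝ => fderiv ℝ (uncurry H) p (0, 1) := by
    funext p
    exact pdy_eq_fderiv hd p.1 p.2
  rw [this]
  exact h'.clm_apply contDiff_const

/-- mixed partials commute for C² functions -/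
lemma pdx_pdy_comm {H : ℝ → ℝ → ℂ} (h : ContDiff ℝ 2 (uncurry H)) :
    pdx (pdy H) = pdy (pdx H) := by
  funext s t
  have h2 : ContDiff ℝ (1 + 1) (uncurry H) := by norm_num; exact h
  have hd : Differentiable ℝ (uncurry H) := h.differentiable two_ne_zero
  have hfd : ContDiff ℝ 1 (fderiv ℝ (uncurry H)) := (contDiff_succ_iff_fderiv.mp h2).2.2
  have hdd : HasFDerivAt (fderiv ℝ (uncurry H))
      (fderiv ℝ (fderiv ℝ (uncurry H)) (s, t)) (s, t) :=
    ((hfd.differentiable one_ne_zero) (s, t)).hasFDerivAt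
  have symm := second_derivative_symmetric (fun y => (hd y).hasFDerivAt) hdd
  -- pdx (pdy H) s t
  have e1 : HasDerivAt (fun s' => pdy H s' t)
      (fderiv ℝ (fderiv ℝ (uncurry H)) (s, t) (1, 0) (0, 1)) s := by
    have hc : HasDerivAt (fun s' : ℝ => fderiv ℝ (uncurry H) (s', t))
        (fderiv ℝ (fderiv ℝ (uncurry H)) (s, t) (1, 0)) s :=
      hdd.comp_hasDerivAt s (hasDerivAt_line t s)
    have := hc.clm_apply (hasDerivAt_const s ((0 : ℝ), (1 : ℝ)))
    simp only [map_zero, add_zero] at this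
    refine HasDerivAt.congr_of_eventuallyEq this ?_
    filter_upwards with s'
    exact (pdy_eq_fderiv hd s' t)
  have e2 : HasDerivAt (fun t' => pdx H s t')
      (fderiv ℝ (fderiv ℝ (uncurry H)) (s, t) (0, 1) (1, 0)) t := by
    have hc : HasDerivAt (fun t' : ℝ => fderiv ℝ (uncurry H) (s, t'))
        (fderiv ℝ (fderiv ℝ (uncurry H)) (s, t) (0, 1)) t :=
      hdd.comp_hasDerivAt t (hasDerivAt_line' s t)
    have := hc.clm_apply (hasDerivAt_const t ((1 : ℝ), (0 : ℝ)))
    simp only [map_zero, add_zero] at this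
    refine HasDerivAt.congr_of_eventuallyEq this ?_
    filter_upwards with t'
    exact (pdx_eq_fderiv hd s t')
  show deriv (fun s' => pdy H s' t) s = deriv (fun t' => pdx H s t') t
  rw [e1.deriv, e2.deriv, symm]

/-- FTC: integrate `pdx H` in the first variable. -/
lemma integral_pdx {H : ℝ → ℝ → ℂ} (hd : Differentiable ℝ (uncurry H))
    (hc : Continuous (uncurry (pdx H))) (a b t : ℝ) :
    ∫ x in a..b, pdx H x t = H b t - H a t :=
  integral_eq_sub_of_hasDerivAt (fun x _ => hasDerivAt_pdx hd x t)
    ((contX hc t).intervalIntegrable a b)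

/-- FTC: integrate `pdy H` in the second variable. -/
lemma integral_pdy {H : ℝ → ℝ → ℂ} (hd : Differentiable ℝ (uncurry H))
    (hc : Continuous (uncurry (pdy H))) (a b s : ℝ) :
    ∫ y in a..b, pdy H s y = H s b - H s a :=
  integral_eq_sub_of_hasDerivAt (fun y _ => hasDerivAt_pdy hd s y)
    ((contY hc s).intervalIntegrable a b)

lemma hasDerivAt_primitive {f : ℝ → ℂ} (hf : Continuous f) (a x : ℝ) :
    HasDerivAt (fun u => ∫ y in a..u, f y) (f x) x :=
  integral_hasDerivAt_right (hf.intervalIntegrable a x)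
    hf.stronglyMeasurable.stronglyMeasurableAtFilter hf.continuousAt

/-- Differentiation under the integral sign for an iterated integral of a continuous
function, with respect to the inner upper limit. -/
lemma hasDerivAt_param {k : ℝ → ℝ → ℂ} (hk : Continuous (uncurry k)) (t s : ℝ) :
    HasDerivAt (fun s' => ∫ η in (0:ℝ)..t, ∫ ω in (0:ℝ)..s', k ω η)
      (∫ η in (0:ℝ)..t, k s η) s := by
  have hkswap : Continuous (uncurry fun η ω => k ω η) :=
    hk.comp continuous_swap
  have hFcont : ∀ x : ℝ, Continuous fun η => ∫ ω in (0:ℝ)..x, k ω η := by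
    intro x
    exact continuous_parametric_intervalIntegral_of_continuous' hkswap 0 x
  obtain ⟨M, hM⟩ := (isCompact_Icc.prod isCompact_Icc :
      IsCompact ((Icc (s - 1) (s + 1)) ×ˢ (uIcc 0 t))).exists_bound_of_continuousOn
    hk.continuousOn
  refine (intervalIntegral.hasDerivAt_integral_of_dominated_loc_of_deriv_le (F := fun x η => ∫ ω in (0:ℝ)..x, k ω η)
    (F' := fun x η => k x η) (bound := fun _ => M) (Metric.ball_mem_nhds s one_pos) ?_ ?_ ?_ ?_ ?_ ?_).2
  · filter_upwards with x using ((hFcont x).aestronglyMeasurable)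
  · exact ((hFcont s).intervalIntegrable 0 t)
  · exact (contY hk s).aestronglyMeasurable
  · filter_upwards with η hη x hx
    refine hM (x, η) ?_
    constructor
    · have := Metric.mem_ball.mp hx
      rw [Real.dist_eq] at this
      constructor <;> [linarith [abs_le.mp this.le] ; linarith [(abs_le.mp this.le).2]]
    · exact uIoc_subset_uIcc hη
  · exact intervalIntegrable_const
  · filter_upwards with η hη x hx
    exact hasDerivAt_primitive (contX hk η) 0 x

lemma hasDerivAt_ofReal (x : ℝ) : HasDerivAt (fun s : ℝ => (s : ℂ)) 1 x := by
  simpa using (hasDerivAt_id x).ofReal_comp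

end Stmt17Aux

open Stmt17Aux

set_option maxHeartbeats 1000000 in
/-- Equivalence of the kernel boundary value problem and its integral equation:
with `DG = (1/3)[3G_{tts} - G_{ttt} - iα̃(2G_{ts} - G_{tt}) - δ̃G_t + r̃G]`, the function `G`
solves the BVP on the closed triangle iff it solves
`G(s,t) = -(r̃/3)st + ∫₀^t∫₀^s∫₀^ω DG(ξ,η) dξ dω dη`. -/
theorem stmt_17 (L α δ r : ℝ) (hL : 0 < L) (G : ℝ → ℝ → ℂ)
    (hG : ContDiff ℝ 3 (Function.uncurry G)) :
    let DG : ℝ → ℝ → ℂ := fun s t =>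
      (1 / 3 : ℂ) * (3 * pdx (pdy (pdy G)) s t - pdy (pdy (pdy G)) s t
        - Complex.I * (α : ℂ) * (2 * pdy (pdx G) s t - pdy (pdy G) s t)
        - (δ : ℂ) * pdy G s t + (r : ℂ) * G s t)
    ((∀ s t : ℝ, 0 ≤ s → 0 ≤ t → s + t ≤ L →
        3 * pdy (pdx (pdx G)) s t - 3 * pdx (pdy (pdy G)) s t + pdy (pdy (pdy G)) s t
          + Complex.I * (α : ℂ) * (2 * pdy (pdx G) s t - pdy (pdy G) s t)
          + (δ : ℂ) * pdy G s t - (r : ℂ) * G s t = 0)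
      ∧ (∀ t ∈ Set.Icc (0:ℝ) L, G 0 t = 0)
      ∧ (∀ s ∈ Set.Icc (0:ℝ) L, G s 0 = 0)
      ∧ (∀ t ∈ Set.Icc (0:ℝ) L, pdx G 0 t = -(r : ℂ) * (t : ℂ) / 3))
    ↔ (∀ s t : ℝ, 0 ≤ s → 0 ≤ t → s + t ≤ L →
        G s t = -((r : ℂ) / 3) * (s : ℂ) * (t : ℂ)
          + ∫ η in (0:ℝ)..t, ∫ ω in (0:ℝ)..s, ∫ ξ in (0:ℝ)..ω, DG ξ η) := by
  intro DG
  have hDGdef : DG = fun s t =>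
      (1 / 3 : ℂ) * (3 * pdx (pdy (pdy G)) s t - pdy (pdy (pdy G)) s t
        - Complex.I * (α : ℂ) * (2 * pdy (pdx G) s t - pdy (pdy G) s t)
        - (δ : ℂ) * pdy G s t + (r : ℂ) * G s t) := rfl
  clear_value DG
  -- smoothness bookkeeping
  have hG3 : ContDiff ℝ (2 + 1) (uncurry G) := by
    exact_mod_cast hG
  have hG2 : ContDiff ℝ (1 + 1) (uncurry G) := hG3.of_le (by norm_num)
  have dG : Differentiable ℝ (uncurry G) := hG.differentiable (by norm_num)
  have cG : Continuous (uncurry G) := hG.continuous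
  have hpx2 : ContDiff ℝ (1 + 1) (uncurry (pdx G)) := contDiff_pdx hG3
  have hpy2 : ContDiff ℝ (1 + 1) (uncurry (pdy G)) := contDiff_pdy hG3
  have hpxy1 : ContDiff ℝ (0 + 1) (uncurry (pdx (pdy G))) := contDiff_pdx hpy2
  have hpyx1 : ContDiff ℝ (0 + 1) (uncurry (pdy (pdx G))) := contDiff_pdy hpx2
  have hpyy1 : ContDiff ℝ (0 + 1) (uncurry (pdy (pdy G))) := contDiff_pdy hpy2
  have hpxx1 : ContDiff ℝ (0 + 1) (uncurry (pdx (pdx G))) := contDiff_pdx hpx2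
  have cxxy : Continuous (uncurry (pdx (pdx (pdy G)))) := (contDiff_pdx hpxy1).continuous
  have cxyy : Continuous (uncurry (pdx (pdy (pdy G)))) := (contDiff_pdx hpyy1).continuous
  have cyyy : Continuous (uncurry (pdy (pdy (pdy G)))) := (contDiff_pdy hpyy1).continuous
  have cyxx : Continuous (uncurry (pdy (pdx (pdx G)))) := (contDiff_pdy hpxx1).continuous
  have comm1 : pdx (pdy G) = pdy (pdx G) := pdx_pdy_comm hG2
  have comm2 : pdx (pdy (pdx G)) = pdy (pdx (pdx G)) := pdx_pdy_comm hpx2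
  have hcc : pdx (pdx (pdy G)) = pdy (pdx (pdx G)) := by rw [comm1, comm2]
  -- continuity of DG
  have cDG : Continuous (uncurry DG) := by
    rw [hDGdef]
    show Continuous fun p : ℝ × ℝ =>
      (1 / 3 : ℂ) * (3 * pdx (pdy (pdy G)) p.1 p.2 - pdy (pdy (pdy G)) p.1 p.2
        - Complex.I * (α : ℂ) * (2 * pdy (pdx G) p.1 p.2 - pdy (pdy G) p.1 p.2)
        - (δ : ℂ) * pdy G p.1 p.2 + (r : ℂ) * G p.1 p.2)
    exact continuous_const.mul
      (((((continuous_const.mul cxyy).sub cyyy).sub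
        (continuous_const.mul ((continuous_const.mul hpyx1.continuous).sub
          hpyy1.continuous))).sub
        (continuous_const.mul hpy2.continuous)).add (continuous_const.mul cG))
  have cI1 : Continuous (uncurry (fun ω η => ∫ ξ in (0:ℝ)..ω, DG ξ η)) := by
    have h0 : Continuous (uncurry (fun η ξ => DG ξ η)) :=
      (cDG.comp continuous_swap).congr fun p => rfl
    have := intervalIntegral.continuous_parametric_primitive_of_continuous
      (f := fun η ξ => DG ξ η) (a₀ := 0) (μ := volume) h0
    exact (this.comp (continuous_snd.prodMk continuous_fst)).congr fun p => rfl
  have cI2 : Continuous (uncurry (fun s η => ∫ ω in (0:ℝ)..s, ∫ ξ in (0:ℝ)..ω, DG ξ η)) := by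
    have h0 : Continuous (uncurry (fun η ω => ∫ ξ in (0:ℝ)..ω, DG ξ η)) :=
      (cI1.comp continuous_swap).congr fun p => rfl
    have := intervalIntegral.continuous_parametric_primitive_of_continuous
      (f := fun η ω => ∫ ξ in (0:ℝ)..ω, DG ξ η) (a₀ := 0) (μ := volume) h0
    exact (this.comp (continuous_snd.prodMk continuous_fst)).congr fun p => rfl
  constructor
  · rintro ⟨hPDE, hBC1, hBC2, hBC3⟩ s t hs ht hst
    have keyF : ∀ ξ η : ℝ, 0 ≤ ξ → 0 ≤ η → ξ + η ≤ L →
        pdx (pdx (pdy G)) ξ η = DG ξ η := by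
      intro ξ η h1 h2 h3
      have h := hPDE ξ η h1 h2 h3
      rw [hcc]
      simp only [hDGdef]
      linear_combination h / 3
    -- inner integral
    have step1 : ∀ η ∈ uIcc (0:ℝ) t, ∀ ω ∈ uIcc (0:ℝ) s,
        (∫ ξ in (0:ℝ)..ω, DG ξ η) = pdx (pdy G) ω η - pdx (pdy G) 0 η := by
      intro η hη ω hω
      rw [uIcc_of_le ht] at hη
      rw [uIcc_of_le hs] at hω
      have : (∫ ξ in (0:ℝ)..ω, DG ξ η) = ∫ ξ in (0:ℝ)..ω, pdx (pdx (pdy G)) ξ η := by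
        refine intervalIntegral.integral_congr fun ξ hξ => ?_
        rw [uIcc_of_le hω.1] at hξ
        exact (keyF ξ η hξ.1 hη.1 (by linarith [hξ.2, hη.2, hω.2])).symm
      rw [this]
      exact integral_pdx (hpxy1.differentiable (by norm_num)) cxxy 0 ω η
    -- middle integral
    have step2 : ∀ η ∈ uIcc (0:ℝ) t,
        (∫ ω in (0:ℝ)..s, ∫ ξ in (0:ℝ)..ω, DG ξ η)
          = (pdy G s η - pdy G 0 η) - s • pdx (pdy G) 0 η := by
      intro η hη
      have : (∫ ω in (0:ℝ)..s, ∫ ξ in (0:ℝ)..ω, DG ξ η)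
          = ∫ ω in (0:ℝ)..s, (pdx (pdy G) ω η - pdx (pdy G) 0 η) := by
        refine intervalIntegral.integral_congr fun ω hω => ?_
        exact step1 η hη ω hω
      rw [this, intervalIntegral.integral_sub
        ((contX hpxy1.continuous η).intervalIntegrable 0 s) intervalIntegrable_const,
        integral_pdx (hpy2.differentiable (by norm_num)) hpxy1.continuous 0 s η,
        intervalIntegral.integral_const, sub_zero]
    -- outer integral
    have step3 : (∫ η in (0:ℝ)..t, ∫ ω in (0:ℝ)..s, ∫ ξ in (0:ℝ)..ω, DG ξ η)
        = ((G s t - G s 0) - (G 0 t - G 0 0)) - s • (pdx G 0 t - pdx G 0 0) := by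
      rw [intervalIntegral.integral_congr step2]
      have i1 : IntervalIntegrable (fun η => pdy G s η) volume 0 t :=
        (contY hpy2.continuous s).intervalIntegrable 0 t
      have i2 : IntervalIntegrable (fun η => pdy G 0 η) volume 0 t :=
        (contY hpy2.continuous 0).intervalIntegrable 0 t
      have i3 : IntervalIntegrable (fun η => s • pdx (pdy G) 0 η) volume 0 t :=
        ((contY hpxy1.continuous 0).const_smul s).intervalIntegrable 0 t
      rw [intervalIntegral.integral_sub (i1.sub i2) i3,
        intervalIntegral.integral_sub i1 i2,
        integral_pdy (hG3.differentiable (by norm_num)) hpy2.continuous 0 t s,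
        integral_pdy (hG3.differentiable (by norm_num)) hpy2.continuous 0 t 0]
      congr 1
      rw [intervalIntegral.integral_smul]
      congr 1
      have : (fun η => pdx (pdy G) 0 η) = fun η => pdy (pdx G) 0 η := by rw [comm1]
      rw [this]
      exact integral_pdy (hpx2.differentiable (by norm_num)) hpyx1.continuous 0 t 0
    rw [step3, hBC2 s ⟨hs, by linarith⟩, hBC1 t ⟨ht, by linarith⟩,
      hBC1 0 ⟨le_rfl, hL.le⟩, hBC3 t ⟨ht, by linarith⟩, hBC3 0 ⟨le_rfl, hL.le⟩]
    push_cast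
    rw [Complex.real_smul]
    ring
  · intro hInt
    have bc1 : ∀ t ∈ Icc (0:ℝ) L, G 0 t = 0 := by
      intro t ht
      have := hInt 0 t le_rfl ht.1 (by linarith [ht.2])
      simpa [intervalIntegral.integral_same] using this
    have bc2 : ∀ s ∈ Icc (0:ℝ) L, G s 0 = 0 := by
      intro s hsm
      have := hInt s 0 hsm.1 le_rfl (by linarith [hsm.2])
      simpa [intervalIntegral.integral_same] using this
    have bc3' : ∀ t : ℝ, 0 ≤ t → t < L → pdx G 0 t = -(r : ℂ) * (t : ℂ) / 3 := by
      intro t ht0 htL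
      have hud : UniqueDiffWithinAt ℝ (Icc (0:ℝ) (L - t)) 0 :=
        (uniqueDiffOn_Icc (by linarith : (0:ℝ) < L - t)) 0 ⟨le_rfl, by linarith⟩
      have hmul : HasDerivAt (fun s' : ℝ => -((r:ℂ)/3) * (s':ℂ) * (t:ℂ))
          (-((r:ℂ)/3) * 1 * (t:ℂ)) 0 :=
        ((hasDerivAt_ofReal 0).const_mul (-((r:ℂ)/3))).mul_const _
      have hTt := hasDerivAt_param cI1 t 0
      have hg := hmul.add hTt
      have hGw : HasDerivWithinAt (fun s' => G s' t)
          (-((r:ℂ)/3) * 1 * (t:ℂ) + ∫ η in (0:ℝ)..t, ∫ ξ in (0:ℝ)..0, DG ξ η)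
          (Icc 0 (L - t)) 0 := by
        refine (hg.hasDerivWithinAt).congr (fun x hx => ?_) ?_
        · exact hInt x t hx.1 ht0 (by linarith [hx.2])
        · exact hInt 0 t le_rfl ht0 (by linarith)
      have h2 : HasDerivWithinAt (fun s' => G s' t) (pdx G 0 t) (Icc (0:ℝ) (L - t)) 0 :=
        (hasDerivAt_pdx dG 0 t).hasDerivWithinAt
      have hval : pdx G 0 t
          = -((r:ℂ)/3) * 1 * (t:ℂ) + ∫ η in (0:ℝ)..t, ∫ ξ in (0:ℝ)..0, DG ξ η := by
        rw [← h2.derivWithin hud, hGw.derivWithin hud]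
      rw [hval]
      simp [intervalIntegral.integral_same]
      ring
    have bc3 : ∀ t ∈ Icc (0:ℝ) L, pdx G 0 t = -(r : ℂ) * (t : ℂ) / 3 := by
      intro t ht
      have hcl : IsClosed {t : ℝ | pdx G 0 t = -(r : ℂ) * (t : ℂ) / 3} :=
        isClosed_eq (contY hpx2.continuous 0)
          (((continuous_const.mul Complex.continuous_ofReal).div_const 3))
      have hsub : Ico (0:ℝ) L ⊆ {t : ℝ | pdx G 0 t = -(r : ℂ) * (t : ℂ) / 3} :=
        fun x hx => bc3' x hx.1 hx.2
      have hmem : t ∈ closure (Ico (0:ℝ) L) := by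
        rw [closure_Ico hL.ne]; exact ht
      exact (hcl.closure_subset_iff.mpr hsub) hmem
    have hA : ∀ s t : ℝ, 0 ≤ s → 0 < t → s + t < L →
        pdy G s t = -((r:ℂ)/3) * (s:ℂ) + ∫ ω in (0:ℝ)..s, ∫ ξ in (0:ℝ)..ω, DG ξ t := by
      intro s t hs ht hst
      have hev : (fun t' => G s t') =ᶠ[nhds t] (fun t' : ℝ => -((r:ℂ)/3) * (s:ℂ) * (t':ℂ)
          + ∫ η in (0:ℝ)..t', ∫ ω in (0:ℝ)..s, ∫ ξ in (0:ℝ)..ω, DG ξ η) := by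
        filter_upwards [Ioo_mem_nhds ht (by linarith : t < L - s)] with t' ht'
        exact hInt s t' hs ht'.1.le (by linarith [ht'.2])
      have hd : HasDerivAt (fun t' : ℝ => -((r:ℂ)/3) * (s:ℂ) * (t':ℂ)
          + ∫ η in (0:ℝ)..t', ∫ ω in (0:ℝ)..s, ∫ ξ in (0:ℝ)..ω, DG ξ η)
          (-((r:ℂ)/3) * (s:ℂ) * 1 + ∫ ω in (0:ℝ)..s, ∫ ξ in (0:ℝ)..ω, DG ξ t) t :=
        ((hasDerivAt_ofReal t).const_mul (-((r:ℂ)/3) * (s:ℂ))).add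
          (hasDerivAt_primitive (contY cI2 s) 0 t)
      show deriv (fun t' => G s t') t = _
      rw [hev.deriv_eq, hd.deriv, mul_one]
    have hB : ∀ s t : ℝ, 0 < s → 0 < t → s + t < L →
        pdx (pdy G) s t = -((r:ℂ)/3) + ∫ ξ in (0:ℝ)..s, DG ξ t := by
      intro s t hs ht hst
      have hev : (fun s' => pdy G s' t) =ᶠ[nhds s] (fun s' : ℝ => -((r:ℂ)/3) * (s':ℂ)
          + ∫ ω in (0:ℝ)..s', ∫ ξ in (0:ℝ)..ω, DG ξ t) := by
        filter_upwards [Ioo_mem_nhds hs (by linarith : s < L - t)] with s' hs'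
        exact hA s' t hs'.1.le ht (by linarith [hs'.2])
      have hd : HasDerivAt (fun s' : ℝ => -((r:ℂ)/3) * (s':ℂ)
          + ∫ ω in (0:ℝ)..s', ∫ ξ in (0:ℝ)..ω, DG ξ t)
          (-((r:ℂ)/3) * 1 + ∫ ξ in (0:ℝ)..s, DG ξ t) s :=
        ((hasDerivAt_ofReal s).const_mul (-((r:ℂ)/3))).add
          (hasDerivAt_primitive (contX cI1 t) 0 s)
      show deriv (fun s' => pdy G s' t) s = _
      rw [hev.deriv_eq, hd.deriv, mul_one]
    have hC : ∀ s t : ℝ, 0 < s → 0 < t → s + t < L →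
        pdx (pdx (pdy G)) s t = DG s t := by
      intro s t hs ht hst
      have hev : (fun s' => pdx (pdy G) s' t) =ᶠ[nhds s]
          (fun s' : ℝ => -((r:ℂ)/3) + ∫ ξ in (0:ℝ)..s', DG ξ t) := by
        filter_upwards [Ioo_mem_nhds hs (by linarith : s < L - t)] with s' hs'
        exact hB s' t hs'.1 ht (by linarith [hs'.2])
      have hd : HasDerivAt (fun s' : ℝ => -((r:ℂ)/3) + ∫ ξ in (0:ℝ)..s', DG ξ t)
          (0 + DG s t) s :=
        (hasDerivAt_const s _).add (hasDerivAt_primitive (contX cDG t) 0 s)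
      show deriv (fun s' => pdx (pdy G) s' t) s = _
      rw [hev.deriv_eq, hd.deriv, zero_add]
    refine ⟨?_, bc1, bc2, bc3⟩
    intro s t hs ht hst
    set φ : ℝ × ℝ → ℂ := fun p =>
        3 * pdy (pdx (pdx G)) p.1 p.2 - 3 * pdx (pdy (pdy G)) p.1 p.2
          + pdy (pdy (pdy G)) p.1 p.2
          + Complex.I * (α : ℂ) * (2 * pdy (pdx G) p.1 p.2 - pdy (pdy G) p.1 p.2)
          + (δ : ℂ) * pdy G p.1 p.2 - (r : ℂ) * G p.1 p.2 with hφ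
    have hφc : Continuous φ := by
      rw [hφ]
      exact ((((continuous_const.mul cyxx).sub (continuous_const.mul cxyy)).add
        cyyy).add (continuous_const.mul ((continuous_const.mul hpyx1.continuous).sub
          hpyy1.continuous))).add (continuous_const.mul hpy2.continuous) |>.sub
        (continuous_const.mul cG)
    have hφ0 : ∀ p : ℝ × ℝ, 0 < p.1 → 0 < p.2 → p.1 + p.2 < L → φ p = 0 := by
      intro p h1 h2 h3
      have hkey : pdy (pdx (pdx G)) p.1 p.2 = DG p.1 p.2 := by
        rw [← hcc]; exact hC p.1 p.2 h1 h2 h3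
      simp only [hDGdef] at hkey
      rw [hφ]
      linear_combination 3 * hkey
    set q : ℝ → ℝ × ℝ :=
      fun ε => ((1 - ε) * s + ε * (L/4), (1 - ε) * t + ε * (L/4)) with hq
    have hqc : Continuous q := by rw [hq]; fun_prop
    have hq0 : q 0 = (s, t) := by rw [hq]; norm_num
    have htend : Filter.Tendsto (fun ε => φ (q ε)) (nhdsWithin 0 (Ioi 0))
        (nhds (φ (s, t))) := by
      have h1 : Filter.Tendsto (fun ε => φ (q ε)) (nhds 0) (nhds (φ (q 0))) :=
        ((hφc.comp hqc).tendsto 0)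
      rw [hq0] at h1
      exact h1.mono_left nhdsWithin_le_nhds
    have hzero : Filter.Tendsto (fun ε => φ (q ε)) (nhdsWithin 0 (Ioi 0)) (nhds 0) := by
      refine Filter.Tendsto.congr' ?_ tendsto_const_nhds
      filter_upwards [Ioo_mem_nhdsGT_of_mem (Set.left_mem_Ico.mpr one_pos)] with ε hε
      refine (hφ0 (q ε) ?_ ?_ ?_).symm
      · show 0 < (1 - ε) * s + ε * (L/4)
        nlinarith [hε.1, hε.2, hL]
      · show 0 < (1 - ε) * t + ε * (L/4)
        nlinarith [hε.1, hε.2, hL]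
      · show ((1 - ε) * s + ε * (L/4)) + ((1 - ε) * t + ε * (L/4)) < L
        nlinarith [hε.1, hε.2, hL, hst]
    have hfin : φ (s, t) = 0 := tendsto_nhds_unique htend hzero
    rw [hφ] at hfin
    exact hfin
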